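/- For every n ≥ 1, the foliage map f restricts to an order isomorphism from H_b^n onto B_n and from H_c^n onto C_n; consequently f : H_b ∪ H_c → B ∪ C is a bijection which respects the orders: for all v, w ∈ H_b (resp. v, w ∈ H_c), v < w if and only if f(v) < f(w). -/

import Mathlib

/-! STATEMENT 12: the foliage map restricts to an order isomorphism
`H_b^n → B_n` and `H_c^n → C_n`, giving an order-respecting bijection
`H_b ∪ H_c → B ∪ C`. -/

/-- The three-letter alphabet `A = {a, b, c}`. -/
inductive Letter : Type
  | a | b | c
deriving DecidableEq

/-- Words on the alphabet. -/
abbrev Word := List Letter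

/-- The free magma `M(A)` on the alphabet: binary complete planar rooted trees
with leaves labelled by letters (fully parenthesized expressions). -/
inductive FM : Type
  | leaf : Letter → FM
  | node : FM → FM → FM
deriving DecidableEq

/-- The foliage map `f : M(A) → A*` (drop all brackets). -/
def fol : FM → Word
  | FM.leaf d => [d]
  | FM.node t t' => fol t ++ fol t'

/-! ### The ordered families of trees `H_b^n`, `H_c^n`

Each level is built as a *sorted list* (increasing with respect to the total
order of the construction); across levels, trees of higher level (with more
leaves) are *smaller*.  The `H_c`-levels are produced by a single
table-building recursion. -/

/-- Table of the levels `H_c^1, …, H_c^n` (entry `i` is the sorted list of the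
trees of `H_c^i`; entry `0` is empty).

* `H_c^1 = {c}`.
* For `m = 2k` even, `H_c^m = ⋃_{i=1}^{k} {(v,w) : v ∈ H_b^i, w ∈ H_c^{m−i}}`,
  ordered lexicographically (`(v,w) < (v′,w′)` iff `v < v′`, or `v = v′` and
  `w < w′`; `v`'s with more leaves are smaller, so the blocks appear for
  `i = k, k−1, …, 1`), where `H_b^1 = {b}` and `H_b^i = {(a,v′) : v′ ∈ H_c^{i−1}}`.
* For `m = 2k+1` odd, additionally the block
  `E_k = {((a,v),w) : v, w ∈ H_c^k, v ≥ w}` is prepended (its elements are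
  smaller than all other elements of `H_c^m`), ordered lexicographically in
  `(v,w)`. -/
def HClevels : ℕ → List (List FM)
  | 0 => [[]]
  | n + 1 =>
    let t := HClevels n
    let C : ℕ → List FM := fun i => t.getD i []
    let m := n + 1
    let k := m / 2
    let prods : List FM :=
      (List.range k).flatMap (fun j =>
        let i := k - j
        if i = 1 then
          (C (m - 1)).map (fun w => FM.node (FM.leaf Letter.b) w)
        else
          (C (i - 1)).flatMap (fun v =>
            (C (m - i)).map (fun w =>
              FM.node (FM.node (FM.leaf Letter.a) v) w)))
    let Ck := C k
    let Ek : List FM :=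
      (List.range Ck.length).flatMap (fun r =>
        (List.range (r + 1)).map (fun s =>
          FM.node (FM.node (FM.leaf Letter.a) (Ck.getD r (FM.leaf Letter.a)))
            (Ck.getD s (FM.leaf Letter.a))))
    let Cm : List FM :=
      if m = 1 then [FM.leaf Letter.c]
      else if m % 2 = 0 then prods
      else Ek ++ prods
    t ++ [Cm]

/-- The level `H_c^n`, as a sorted (increasing) list of trees. -/
def HCn (n : ℕ) : List FM := (HClevels n).getD n []

/-- The level `H_b^n`, as a sorted (increasing) list of trees:
`H_b^1 = {b}` and `H_b^n = {(a,v) : v ∈ H_c^{n−1}}` with the inherited order. -/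
def HBn : ℕ → List FM
  | 0 => []
  | 1 => [FM.leaf Letter.b]
  | n + 2 => (HCn (n + 1)).map (fun v => FM.node (FM.leaf Letter.a) v)

/-- The level (number of leaves) of a tree. -/
def lev (h : FM) : ℕ := (fol h).length

/-- Position of a tree inside its level `H_c^{lev h}`. -/
def cIdx (h : FM) : ℕ := (HCn (lev h)).findIdx (fun x => decide (x = h))

/-- Position of a tree inside its level `H_b^{lev h}`. -/
def bIdx (h : FM) : ℕ := (HBn (lev h)).findIdx (fun x => decide (x = h))

/-- The strict total order on `H_c = ⋃_n H_c^n`: trees of higher level are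
smaller, trees of the same level are compared by position in the sorted level. -/
def cLt (v w : FM) : Prop := lev w < lev v ∨ (lev v = lev w ∧ cIdx v < cIdx w)

/-- `v ≤ w` in `H_c`. -/
def cLe (v w : FM) : Prop := cLt v w ∨ v = w

/-- The strict total order on `H_b = ⋃_n H_b^n`: trees of higher level are
smaller, trees of the same level are compared by position in the sorted level. -/
def bLt (v w : FM) : Prop := lev w < lev v ∨ (lev v = lev w ∧ bIdx v < bIdx w)

/-- `v ≤ w` in `H_b`. -/
def bLe (v w : FM) : Prop := bLt v w ∨ v = w

/-! ### The ordered families of words `B_n`, `C_n`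

Each level is built as a *sorted list* (increasing with respect to the total
order of the construction); across levels, longer words are *smaller*. -/

/-- Table of the word levels `C_1, …, C_n` (entry `i` is the sorted list of the
words of `C_i`; entry `0` is empty): `C_1 = {c}`; for `m = 2k` even,
`C_m = ⋃_{i=1}^{k} B_i C_{m−i}` ordered lexicographically in `(v,w)` (blocks for
`i = k, …, 1`, with `B_1 = {b}` and `B_i = aC_{i−1}` for `i ≥ 2`); for
`m = 2k+1` odd, additionally the block `D_k = {avw : v,w ∈ C_k, v ≥ w}` is
prepended (its elements being smaller), ordered lexicographically in `(v,w)`. -/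
def CWlevels : ℕ → List (List Word)
  | 0 => [[]]
  | n + 1 =>
    let t := CWlevels n
    let C : ℕ → List Word := fun i => t.getD i []
    let m := n + 1
    let k := m / 2
    let prods : List Word :=
      (List.range k).flatMap (fun j =>
        let i := k - j
        if i = 1 then
          (C (m - 1)).map (fun w => Letter.b :: w)
        else
          (C (i - 1)).flatMap (fun v =>
            (C (m - i)).map (fun w => Letter.a :: (v ++ w))))
    let Ck := C k
    let Dk : List Word :=
      (List.range Ck.length).flatMap (fun r =>
        (List.range (r + 1)).map (fun s =>
          Letter.a :: (Ck.getD r [] ++ Ck.getD s [])))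
    let Cm : List Word :=
      if m = 1 then [[Letter.c]]
      else if m % 2 = 0 then prods
      else Dk ++ prods
    t ++ [Cm]

/-- The word level `C_n`, as a sorted (increasing) list. -/
def CWn (n : ℕ) : List Word := (CWlevels n).getD n []

/-- The word level `B_n`, as a sorted (increasing) list: `B_1 = {b}`,
`B_n = aC_{n−1}` with the inherited order. -/
def BWn : ℕ → List Word
  | 0 => []
  | 1 => [[Letter.b]]
  | n + 2 => (CWn (n + 1)).map (fun v => Letter.a :: v)

/-- Position of a word inside its level `C_{|w|}`. -/
def cwIdx (w : Word) : ℕ := (CWn w.length).findIdx (fun x => decide (x = w))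

/-- Position of a word inside its level `B_{|w|}`. -/
def bwIdx (w : Word) : ℕ := (BWn w.length).findIdx (fun x => decide (x = w))

/-- The strict total order on the set of words `C = ⋃_n C_n`. -/
def cwLt (v w : Word) : Prop :=
  w.length < v.length ∨ (v.length = w.length ∧ cwIdx v < cwIdx w)

/-- The strict total order on the set of words `B = ⋃_n B_n`. -/
def bwLt (v w : Word) : Prop :=
  w.length < v.length ∨ (v.length = w.length ∧ bwIdx v < bwIdx w)

-- ===== auxiliary development =====
namespace FolAux
open List

/-! ### Generic block constructions mirroring the recursions -/

def prodsG {α : Type} (C : ℕ → List α) (nb : α → α) (na : α → α → α) (m : ℕ) :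
    List α :=
  (List.range (m / 2)).flatMap (fun j =>
    let i := m / 2 - j
    if i = 1 then (C (m - 1)).map nb
    else (C (i - 1)).flatMap (fun v => (C (m - i)).map (fun w => na v w)))

def DG {α : Type} (C : ℕ → List α) (na : α → α → α) (d : α) (k : ℕ) : List α :=
  (List.range (C k).length).flatMap (fun r =>
    (List.range (r + 1)).map (fun s =>
      na ((C k).getD r d) ((C k).getD s d)))

def naW (v w : Word) : Word := Letter.a :: (v ++ w)
def nbW (w : Word) : Word := Letter.b :: w
def naT (v w : FM) : FM := FM.node (FM.node (FM.leaf Letter.a) v) w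
def nbT (w : FM) : FM := FM.node (FM.leaf Letter.b) w

/-! ### Table lemmas -/

lemma CWlevels_length : ∀ n, (CWlevels n).length = n + 1
  | 0 => rfl
  | n + 1 => by rw [CWlevels]; simp [CWlevels_length n]

lemma HClevels_length : ∀ n, (HClevels n).length = n + 1
  | 0 => rfl
  | n + 1 => by rw [HClevels]; simp [HClevels_length n]

lemma CWlevels_getD : ∀ n i, i ≤ n → (CWlevels n).getD i [] = CWn i := by
  intro n
  induction n with
  | zero => intro i hi; interval_cases i; rfl
  | succ n ih =>
    intro i hi
    rcases Nat.lt_or_ge i (n + 1) with h | h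
    · have : (CWlevels (n+1)).getD i [] = (CWlevels n).getD i [] := by
        rw [CWlevels]
        exact List.getD_append _ _ _ i (by rw [CWlevels_length]; omega)
      rw [this, ih i (by omega)]
    · have : i = n + 1 := by omega
      subst this; rfl

lemma HClevels_getD : ∀ n i, i ≤ n → (HClevels n).getD i [] = HCn i := by
  intro n
  induction n with
  | zero => intro i hi; interval_cases i; rfl
  | succ n ih =>
    intro i hi
    rcases Nat.lt_or_ge i (n + 1) with h | h
    · have : (HClevels (n+1)).getD i [] = (HClevels n).getD i [] := by
        rw [HClevels]
        exact List.getD_append _ _ _ i (by rw [HClevels_length]; omega)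
      rw [this, ih i (by omega)]
    · have : i = n + 1 := by omega
      subst this; rfl

lemma getD_concat {α : Type} (l : List α) (a d : α) (i : ℕ) (h : i = l.length) :
    (l ++ [a]).getD i d = a := by
  subst h
  rw [List.getD_append_right _ _ _ _ le_rfl]
  simp

lemma prodsG_congr {α : Type} {C C' : ℕ → List α} {nb na m}
    (h : ∀ i, i < m → C i = C' i) :
    prodsG C nb na m = prodsG C' nb na m := by
  unfold prodsG
  apply List.flatMap_congr
  intro j hj
  rw [List.mem_range] at hj
  have hk2 : m / 2 * 2 ≤ m := Nat.div_mul_le_self m 2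
  have hi1 : 1 ≤ m / 2 - j := by omega
  have him : m / 2 - j ≤ m / 2 := by omega
  simp only []
  by_cases h1 : m / 2 - j = 1
  · rw [if_pos h1, if_pos h1, h (m-1) (by omega)]
  · rw [if_neg h1, if_neg h1, h (m / 2 - j - 1) (by omega),
      h (m - (m / 2 - j)) (by omega)]

lemma DG_congr {α : Type} {C C' : ℕ → List α} {na d k} (h : C k = C' k) :
    DG C na d k = DG C' na d k := by
  unfold DG; rw [h]

lemma CWn_succ (n : ℕ) :
    CWn (n + 1) =
      if n + 1 = 1 then [[Letter.c]]
      else if (n + 1) % 2 = 0 then prodsG CWn nbW naW (n + 1)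
      else DG CWn naW [] ((n + 1) / 2) ++ prodsG CWn nbW naW (n + 1) := by
  have h0 : CWn (n + 1) = (CWlevels (n + 1)).getD (n + 1) [] := rfl
  rw [h0]
  show (CWlevels n ++ [_]).getD (n+1) [] = _
  rw [getD_concat _ _ _ _ (by rw [CWlevels_length])]
  have hC : ∀ i, i ≤ n → (CWlevels n).getD i [] = CWn i := CWlevels_getD n
  rcases Nat.eq_zero_or_pos n with h0' | hpos
  · subst h0'; rfl
  · have hm1 : ¬ (n + 1 = 1) := by omega
    rw [if_neg hm1, if_neg hm1]
    have hprods :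
        prodsG (fun i => (CWlevels n).getD i []) nbW naW (n + 1)
          = prodsG CWn nbW naW (n + 1) :=
      prodsG_congr (fun i hi => hC i (by omega))
    have hD : DG (fun i => (CWlevels n).getD i []) naW [] ((n+1)/2)
        = DG CWn naW [] ((n+1)/2) :=
      DG_congr (hC _ (by omega))
    show (if (n+1) % 2 = 0 then prodsG (fun i => (CWlevels n).getD i []) nbW naW (n+1)
        else DG (fun i => (CWlevels n).getD i []) naW [] ((n+1)/2)
          ++ prodsG (fun i => (CWlevels n).getD i []) nbW naW (n+1)) = _
    rw [hprods, hD]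

lemma HCn_succ (n : ℕ) :
    HCn (n + 1) =
      if n + 1 = 1 then [FM.leaf Letter.c]
      else if (n + 1) % 2 = 0 then prodsG HCn nbT naT (n + 1)
      else DG HCn naT (FM.leaf Letter.a) ((n + 1) / 2)
        ++ prodsG HCn nbT naT (n + 1) := by
  have h0 : HCn (n + 1) = (HClevels (n + 1)).getD (n + 1) [] := rfl
  rw [h0]
  show (HClevels n ++ [_]).getD (n+1) [] = _
  rw [getD_concat _ _ _ _ (by rw [HClevels_length])]
  have hC : ∀ i, i ≤ n → (HClevels n).getD i [] = HCn i := HClevels_getD n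
  rcases Nat.eq_zero_or_pos n with h0' | hpos
  · subst h0'; rfl
  · have hm1 : ¬ (n + 1 = 1) := by omega
    rw [if_neg hm1, if_neg hm1]
    have hprods :
        prodsG (fun i => (HClevels n).getD i []) nbT naT (n + 1)
          = prodsG HCn nbT naT (n + 1) :=
      prodsG_congr (fun i hi => hC i (by omega))
    have hD : DG (fun i => (HClevels n).getD i []) naT (FM.leaf Letter.a) ((n+1)/2)
        = DG HCn naT (FM.leaf Letter.a) ((n+1)/2) :=
      DG_congr (hC _ (by omega))
    show (if (n+1) % 2 = 0 then prodsG (fun i => (HClevels n).getD i []) nbT naT (n+1)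
        else DG (fun i => (HClevels n).getD i []) naT (FM.leaf Letter.a) ((n+1)/2)
          ++ prodsG (fun i => (HClevels n).getD i []) nbT naT (n+1)) = _
    rw [hprods, hD]

end FolAux
namespace FolAux
open List

lemma CWn_zero : CWn 0 = [] := rfl

/-- Membership in a `prodsG` block. -/
lemma mem_prodsG {α : Type} {C : ℕ → List α} {nb na m} {x : α}
    (hx : x ∈ prodsG C nb na m) :
    (∃ w, w ∈ C (m - 1) ∧ x = nb w) ∨
    (∃ i, 2 ≤ i ∧ i ≤ m / 2 ∧
      ∃ v w, v ∈ C (i - 1) ∧ w ∈ C (m - i) ∧ x = na v w) := by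
  unfold prodsG at hx
  rw [List.mem_flatMap] at hx
  obtain ⟨j, hj, hx⟩ := hx
  rw [List.mem_range] at hj
  simp only [] at hx
  by_cases h1 : m / 2 - j = 1
  · rw [if_pos h1, List.mem_map] at hx
    obtain ⟨w, hw, hxw⟩ := hx
    exact Or.inl ⟨w, hw, hxw.symm⟩
  · rw [if_neg h1, List.mem_flatMap] at hx
    obtain ⟨v, hv, hx⟩ := hx
    rw [List.mem_map] at hx
    obtain ⟨w, hw, hxw⟩ := hx
    exact Or.inr ⟨m / 2 - j, by omega, by omega, v, w, hv, hw, hxw.symm⟩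

/-- Membership in a `DG` block. -/
lemma mem_DG {α : Type} {C : ℕ → List α} {na d k} {x : α}
    (hx : x ∈ DG C na d k) :
    ∃ v w, v ∈ C k ∧ w ∈ C k ∧ x = na v w := by
  unfold DG at hx
  rw [List.mem_flatMap] at hx
  obtain ⟨r, hr, hx⟩ := hx
  rw [List.mem_range] at hr
  rw [List.mem_map] at hx
  obtain ⟨s, hs, hxw⟩ := hx
  rw [List.mem_range] at hs
  refine ⟨(C k).getD r d, (C k).getD s d, ?_, ?_, hxw.symm⟩
  · rw [List.getD_eq_getElem _ _ hr]; exact List.getElem_mem hr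
  · rw [List.getD_eq_getElem _ _ (by omega)]; exact List.getElem_mem (by omega)

/-- Shape of words in `C_n`. -/
lemma CWn_shape {n : ℕ} {w : Word} (hw : w ∈ CWn n) :
    (w = [Letter.c] ∧ n = 1) ∨
    (∃ w', w = Letter.b :: w' ∧ 2 ≤ n ∧ w' ∈ CWn (n - 1)) ∨
    (∃ p q v u, 1 ≤ p ∧ 1 ≤ q ∧ p + q + 1 = n ∧ v ∈ CWn p ∧ u ∈ CWn q ∧
      w = Letter.a :: (v ++ u)) := by
  rcases n with _ | n
  · simp [CWn_zero] at hw
  rw [CWn_succ] at hw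
  by_cases h1 : n + 1 = 1
  · rw [if_pos h1] at hw
    simp at hw
    exact Or.inl ⟨hw, h1⟩
  have hn2 : 2 ≤ n + 1 := by omega
  have core : w ∈ prodsG CWn nbW naW (n + 1) →
      (∃ w', w = Letter.b :: w' ∧ 2 ≤ n + 1 ∧ w' ∈ CWn (n + 1 - 1)) ∨
      (∃ p q v u, 1 ≤ p ∧ 1 ≤ q ∧ p + q + 1 = n + 1 ∧ v ∈ CWn p ∧ u ∈ CWn q ∧
        w = Letter.a :: (v ++ u)) := by
    intro hw
    rcases mem_prodsG hw with ⟨w', hw', rfl⟩ | ⟨i, hi2, hik, v, u, hv, hu, rfl⟩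
    · exact Or.inl ⟨w', rfl, hn2, hw'⟩
    · have hin : i ≤ n := by omega
      exact Or.inr ⟨i - 1, n + 1 - i, v, u, by omega, by omega, by omega,
        hv, hu, rfl⟩
  rw [if_neg h1] at hw
  by_cases he : (n + 1) % 2 = 0
  · rw [if_pos he] at hw
    rcases core hw with h | h
    · exact Or.inr (Or.inl h)
    · exact Or.inr (Or.inr h)
  · rw [if_neg he, List.mem_append] at hw
    rcases hw with hw | hw
    · obtain ⟨v, u, hv, hu, rfl⟩ := mem_DG hw
      have hk : 1 ≤ (n + 1) / 2 ∧ (n + 1) / 2 + (n + 1) / 2 + 1 = n + 1 := by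
        omega
      exact Or.inr (Or.inr ⟨(n+1)/2, (n+1)/2, v, u, hk.1, hk.1, hk.2, hv, hu, rfl⟩)
    · rcases core hw with h | h
      · exact Or.inr (Or.inl h)
      · exact Or.inr (Or.inr h)

/-- All words of `C_n` have length `n`. -/
lemma CWn_length : ∀ n, ∀ w ∈ CWn n, w.length = n := by
  intro n
  induction n using Nat.strong_induction_on with
  | _ n ih =>
    intro w hw
    rcases CWn_shape hw with ⟨rfl, rfl⟩ | ⟨w', rfl, hn2, hw'⟩ |
        ⟨p, q, v, u, hp, hq, hpq, hv, hu, rfl⟩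
    · rfl
    · have := ih (n - 1) (by omega) w' hw'
      simp [this]; omega
    · have h1 := ih p (by omega) v hv
      have h2 := ih q (by omega) u hu
      simp [h1, h2]; omega

lemma CWn_pos {n : ℕ} {w : Word} (hw : w ∈ CWn n) : 1 ≤ n := by
  rcases Nat.eq_zero_or_pos n with h | h
  · subst h; simp [CWn_zero] at hw
  · exact h

/-- `C` is a prefix code. -/
lemma CWn_prefix_aux : ∀ N, ∀ u' u p q, u'.length ≤ N →
    u ∈ CWn p → u' ∈ CWn q → u <+: u' → u = u' := by
  intro N
  induction N with
  | zero =>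
    intro u' u p q hN hu hu' _
    have := CWn_length q u' hu'
    have := CWn_pos hu'
    omega
  | succ N ih =>
    intro u' u p q hN hu hu' hpre
    have hlu : u.length = p := CWn_length p u hu
    have hlu' : u'.length = q := CWn_length q u' hu'
    have hp1 : 1 ≤ p := CWn_pos hu
    rcases CWn_shape hu' with ⟨rfl, rfl⟩ | ⟨w', rfl, hq2, hw'⟩ |
        ⟨p', q', v', w', hp', hq', hpq', hv', hw', rfl⟩
    · refine hpre.eq_of_length_le ?_
      simp only [List.length_cons, List.length_nil]
      omega
    · -- u' = b :: w'
      rcases CWn_shape hu with ⟨rfl, rfl⟩ | ⟨w0, rfl, hp2, hw0⟩ |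
          ⟨_, _, v0, w0, _, _, _, _, _, rfl⟩
      · rw [List.cons_prefix_cons] at hpre; exact absurd hpre.1 (by simp)
      · rw [List.cons_prefix_cons] at hpre
        have : w0 = w' :=
          ih w' w0 (p - 1) (q - 1) (by simp at hN; omega) hw0 hw' hpre.2
        rw [this]
      · rw [List.cons_prefix_cons] at hpre; exact absurd hpre.1 (by simp)
    · -- u' = a :: (v' ++ w')
      rcases CWn_shape hu with ⟨rfl, rfl⟩ | ⟨w0, rfl, hp2, hw0⟩ |
          ⟨p0, q0, v0, w0, hp0, hq0, hpq0, hv0, hw0, rfl⟩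
      · rw [List.cons_prefix_cons] at hpre; exact absurd hpre.1 (by simp)
      · rw [List.cons_prefix_cons] at hpre; exact absurd hpre.1 (by simp)
      · rw [List.cons_prefix_cons] at hpre
        have hpre2 : v0 ++ w0 <+: v' ++ w' := hpre.2
        have hv0' : v0 <+: v' ++ w' := (List.prefix_append v0 w0).trans hpre2
        have hv'' : v' <+: v' ++ w' := List.prefix_append v' w'
        have hlv0 : v0.length = p0 := CWn_length p0 v0 hv0
        have hlv' : v'.length = p' := CWn_length p' v' hv'
        have hlw' : w'.length = q' := CWn_length q' w' hw'
        have hlen2 : v0.length + w0.length ≤ v'.length + w'.length := by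
          have := hpre2.length_le
          simp only [List.length_append] at this
          omega
        have hlw0 : w0.length = q0 := CWn_length q0 w0 hw0
        have hvv : v0 = v' := by
          rcases le_or_gt v0.length v'.length with hle | hlt
          · exact ih v' v0 p0 p'
              (by simp only [List.length_cons, List.length_append] at hN ⊢; omega)
              hv0 hv' (List.prefix_of_prefix_length_le hv0' hv'' hle)
          · exact (ih v0 v' p' p0
              (by simp only [List.length_cons, List.length_append] at hN ⊢; omega)
              hv' hv0 (List.prefix_of_prefix_length_le hv'' hv0' (by omega))).symm
        subst hvv
        have hww : w0 <+: w' := (List.prefix_append_right_inj v0).mp hpre2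
        have : w0 = w' := ih w' w0 q0 q'
          (by simp only [List.length_cons, List.length_append] at hN ⊢; omega)
          hw0 hw' hww
        rw [this]

lemma CWn_prefix {u u' : Word} {p q : ℕ} (hu : u ∈ CWn p) (hu' : u' ∈ CWn q)
    (hpre : u <+: u') : u = u' :=
  CWn_prefix_aux u'.length u' u p q le_rfl hu hu' hpre

/-- Key injectivity: the `a·v·w` presentation is unique. -/
lemma naW_inj {p p' q q' : ℕ} {v v' u u' : Word}
    (hv : v ∈ CWn p) (hv' : v' ∈ CWn p') (hu : u ∈ CWn q) (hu' : u' ∈ CWn q')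
    (h : naW v u = naW v' u') : v = v' ∧ u = u' := by
  unfold naW at h
  have happ : v ++ u = v' ++ u' := by injection h
  have h1 : v <+: v' ++ u' := happ ▸ List.prefix_append v u
  have h2 : v' <+: v' ++ u' := List.prefix_append v' u'
  have hvv : v = v' := by
    rcases le_or_gt v.length v'.length with hle | hlt
    · exact CWn_prefix hv hv' (List.prefix_of_prefix_length_le h1 h2 hle)
    · exact (CWn_prefix hv' hv
        (List.prefix_of_prefix_length_le h2 h1 (by omega))).symm
  subst hvv
  exact ⟨rfl, by simpa using happ⟩

end FolAux
namespace FolAux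
open List

/-! ### Map lemmas: `fol` intertwines the generic constructions -/

lemma map_prodsG {α β : Type} (f : α → β) {Ct : ℕ → List α} {Cw : ℕ → List β}
    {nbt : α → α} {nat : α → α → α} {nbw : β → β} {naw : β → β → β} {m : ℕ}
    (hC : ∀ i, i < m → (Ct i).map f = Cw i)
    (hnb : ∀ x, f (nbt x) = nbw (f x))
    (hna : ∀ x y, f (nat x y) = naw (f x) (f y)) :
    (prodsG Ct nbt nat m).map f = prodsG Cw nbw naw m := by
  unfold prodsG
  rw [List.map_flatMap]
  apply List.flatMap_congr
  intro j hj
  rw [List.mem_range] at hj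
  have hm2 : 2 ≤ m := by omega
  have hi1 : 1 ≤ m / 2 - j := by omega
  simp only []
  by_cases h1 : m / 2 - j = 1
  · rw [if_pos h1, if_pos h1, List.map_map, ← hC (m - 1) (by omega),
      List.map_map]
    congr 1
    funext x
    exact hnb x
  · rw [if_neg h1, if_neg h1, List.map_flatMap,
      ← hC (m / 2 - j - 1) (by omega), List.flatMap_map]
    apply List.flatMap_congr
    intro v _
    rw [List.map_map, ← hC (m - (m / 2 - j)) (by omega), List.map_map]
    congr 1
    funext x
    exact hna v x

lemma map_DG {α β : Type} (f : α → β) {Ct : ℕ → List α} {Cw : ℕ → List β}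
    {nat : α → α → α} {naw : β → β → β} {dt : α} {dw : β} {k : ℕ}
    (hC : (Ct k).map f = Cw k)
    (hna : ∀ x y, f (nat x y) = naw (f x) (f y)) :
    (DG Ct nat dt k).map f = DG Cw naw dw k := by
  have hlen : (Cw k).length = (Ct k).length := by rw [← hC, List.length_map]
  unfold DG
  rw [List.map_flatMap, hlen]
  apply List.flatMap_congr
  intro r hr
  rw [List.mem_range] at hr
  rw [List.map_map]
  apply List.map_congr_left
  intro s hs
  rw [List.mem_range] at hs
  have hs' : s < (Ct k).length := by omega
  simp only [Function.comp_apply]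
  rw [hna, List.getD_eq_getElem _ _ hr, List.getD_eq_getElem _ _ hs',
    List.getD_eq_getElem _ _ (by omega : r < (Cw k).length),
    List.getD_eq_getElem _ _ (by omega : s < (Cw k).length)]
  have key : ∀ i (h : i < (Ct k).length), f (Ct k)[i] = (Cw k)[i]'(by omega) := by
    intro i h
    have h2 : i < (map f (Ct k)).length := by simpa using h
    calc f (Ct k)[i] = (map f (Ct k))[i]'h2 := (List.getElem_map f).symm
      _ = (Cw k)[i]'(by omega) := List.getElem_of_eq hC h2
  rw [key r hr, key s hs']

lemma fol_nb : ∀ x, fol (nbT x) = nbW (fol x) := fun x => rfl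

lemma fol_na : ∀ x y, fol (naT x y) = naW (fol x) (fol y) := by
  intro x y
  show (fol (FM.leaf Letter.a) ++ fol x) ++ fol y = Letter.a :: (fol x ++ fol y)
  simp [fol]

/-! ### Nodup lemmas -/

/-- The `j`-th block of `prodsG CWn`. -/
def blockW (m j : ℕ) : List Word :=
  let i := m / 2 - j
  if i = 1 then (CWn (m - 1)).map nbW
  else (CWn (i - 1)).flatMap (fun v => (CWn (m - i)).map (fun w => naW v w))

lemma prodsW_eq_blocks (m : ℕ) :
    prodsG CWn nbW naW m = (List.range (m / 2)).flatMap (blockW m) := rfl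

lemma mem_blockW {m j : ℕ} {x : Word} (hx : x ∈ blockW m j) :
    (m / 2 - j = 1 ∧ ∃ w', w' ∈ CWn (m - 1) ∧ x = nbW w') ∨
    (m / 2 - j ≠ 1 ∧ ∃ v u, v ∈ CWn (m / 2 - j - 1) ∧
      u ∈ CWn (m - (m / 2 - j)) ∧ x = naW v u) := by
  unfold blockW at hx
  simp only [] at hx
  by_cases h1 : m / 2 - j = 1
  · rw [if_pos h1, List.mem_map] at hx
    obtain ⟨w', hw', hxw⟩ := hx
    exact Or.inl ⟨h1, w', hw', hxw.symm⟩
  · rw [if_neg h1, List.mem_flatMap] at hx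
    obtain ⟨v, hv, hx⟩ := hx
    rw [List.mem_map] at hx
    obtain ⟨u, hu, hxu⟩ := hx
    exact Or.inr ⟨h1, v, u, hv, hu, hxu.symm⟩

lemma blockW_nodup {m j : ℕ} (hnd : ∀ i, i < m → (CWn i).Nodup) (hm : 2 ≤ m)
    (hj : j < m / 2) : (blockW m j).Nodup := by
  unfold blockW
  simp only []
  have hi1 : 1 ≤ m / 2 - j := by omega
  by_cases h1 : m / 2 - j = 1
  · rw [if_pos h1]
    exact (hnd (m - 1) (by omega)).map (fun x y h => by
      unfold nbW at h; injection h)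
  · rw [if_neg h1]
    rw [List.nodup_flatMap]
    constructor
    · intro v _
      exact ((hnd (m - (m / 2 - j)) (by omega))).map_on
        (fun x _ y _ h => by
          unfold naW at h
          have := List.append_cancel_left (by injection h : v ++ x = v ++ y)
          exact this)
    · apply (hnd (m / 2 - j - 1) (by omega)).imp_of_mem
      intro v v' hv hv' hne x hx1 hx2
      rw [List.mem_map] at hx1 hx2
      obtain ⟨w1, _, h1⟩ := hx1
      obtain ⟨w2, _, h2⟩ := hx2
      have h3 : naW v w1 = naW v' w2 := by rw [h1, h2]
      unfold naW at h3
      have h4 : v ++ w1 = v' ++ w2 := by injection h3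
      have hlen : v.length = v'.length := by
        rw [CWn_length _ v hv, CWn_length _ v' hv']
      exact hne (List.append_inj h4 hlen).1

lemma blockW_disjoint {m j1 j2 : ℕ} (hj12 : j1 < j2) (hj2 : j2 < m / 2) :
    (blockW m j1).Disjoint (blockW m j2) := by
  intro x hx1 hx2
  have hi2 : 1 ≤ m / 2 - j2 := by omega
  have hi12 : m / 2 - j2 < m / 2 - j1 := by omega
  have h1ne : m / 2 - j1 ≠ 1 := by omega
  rcases mem_blockW hx1 with ⟨h1, _⟩ | ⟨_, v, u, hv, hu, rfl⟩
  · exact h1ne h1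
  rcases mem_blockW hx2 with ⟨_, w', _, hxw⟩ | ⟨_, v', u', hv', hu', hxw⟩
  · exact absurd (by injection hxw : Letter.a = Letter.b) (by simp)
  · have := naW_inj hv hv' hu hu' hxw
    have hlv : v.length = m / 2 - j1 - 1 := CWn_length _ v hv
    have hlv' : v'.length = m / 2 - j2 - 1 := CWn_length _ v' hv'
    rw [this.1] at hlv
    omega

lemma prodsW_nodup {m : ℕ} (hm : 2 ≤ m)
    (hnd : ∀ i, i < m → (CWn i).Nodup) :
    (prodsG CWn nbW naW m).Nodup := by
  rw [prodsW_eq_blocks, List.nodup_flatMap]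
  constructor
  · intro j hj
    rw [List.mem_range] at hj
    exact blockW_nodup hnd hm hj
  · rw [List.pairwise_iff_getElem]
    intro a b ha hb hab
    simp only [List.length_range] at ha hb
    rw [List.getElem_range, List.getElem_range]
    exact blockW_disjoint hab hb

lemma DW_nodup {k : ℕ} (hnd : (CWn k).Nodup) :
    (DG CWn naW [] k).Nodup := by
  unfold DG
  rw [List.nodup_flatMap]
  constructor
  · intro r hr
    rw [List.mem_range] at hr
    apply (List.nodup_range).map_on
    intro s hs s' hs' h
    rw [List.mem_range] at hs hs'
    unfold naW at h
    have h2 := List.append_cancel_left (by injection h :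
      (CWn k).getD r [] ++ (CWn k).getD s [] =
        (CWn k).getD r [] ++ (CWn k).getD s' [])
    rw [List.getD_eq_getElem _ _ (by omega : s < (CWn k).length),
      List.getD_eq_getElem _ _ (by omega : s' < (CWn k).length)] at h2
    exact (hnd.getElem_inj_iff).mp h2
  · rw [List.pairwise_iff_getElem]
    intro a b ha hb hab
    simp only [List.length_range] at ha hb
    rw [List.getElem_range, List.getElem_range]
    intro x hx1 hx2
    rw [List.mem_map] at hx1 hx2
    obtain ⟨s1, hs1, h1⟩ := hx1
    obtain ⟨s2, hs2, h2⟩ := hx2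
    rw [List.mem_range] at hs1 hs2
    have h3 : naW ((CWn k).getD a []) ((CWn k).getD s1 []) =
        naW ((CWn k).getD b []) ((CWn k).getD s2 []) := by rw [h1, h2]
    unfold naW at h3
    have h4 := (by injection h3 :
      (CWn k).getD a [] ++ (CWn k).getD s1 [] =
        (CWn k).getD b [] ++ (CWn k).getD s2 [])
    have hma : (CWn k).getD a [] ∈ CWn k := by
      rw [List.getD_eq_getElem _ _ ha]; exact List.getElem_mem ha
    have hmb : (CWn k).getD b [] ∈ CWn k := by
      rw [List.getD_eq_getElem _ _ hb]; exact List.getElem_mem hb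
    have hlen : ((CWn k).getD a []).length = ((CWn k).getD b []).length := by
      rw [CWn_length _ _ hma, CWn_length _ _ hmb]
    have h5 := (List.append_inj h4 hlen).1
    rw [List.getD_eq_getElem _ _ ha, List.getD_eq_getElem _ _ hb] at h5
    exact absurd ((hnd.getElem_inj_iff).mp h5) (by omega)

lemma DW_prodsW_disjoint {m : ℕ} (hm : m % 2 = 1) (hm3 : 3 ≤ m) :
    (DG CWn naW [] (m / 2)).Disjoint (prodsG CWn nbW naW m) := by
  intro x hx1 hx2
  obtain ⟨v, u, hv, hu, rfl⟩ := mem_DG hx1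
  rcases mem_prodsG hx2 with ⟨w', _, hxw⟩ | ⟨i, hi2, hik, v', u', hv', hu', hxw⟩
  · exact absurd (by injection hxw : Letter.a = Letter.b) (by simp)
  · have := naW_inj hv hv' hu hu' hxw
    have hlv : v.length = m / 2 := CWn_length _ v hv
    have hlv' : v'.length = i - 1 := CWn_length _ v' hv'
    rw [this.1] at hlv
    omega

/-! ### Main induction: `fol` maps levels to levels, and levels are nodup -/

lemma main : ∀ n, (HCn n).map fol = CWn n ∧ (CWn n).Nodup := by
  intro n
  induction n using Nat.strong_induction_on with
  | _ n ih =>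
    rcases n with _ | n
    · exact ⟨rfl, List.nodup_nil⟩
    rw [HCn_succ, CWn_succ]
    by_cases h1 : n + 1 = 1
    · rw [if_pos h1, if_pos h1]
      exact ⟨rfl, by simp⟩
    have hm2 : 2 ≤ n + 1 := by omega
    have hC : ∀ i, i < n + 1 → (HCn i).map fol = CWn i := fun i hi => (ih i hi).1
    have hnd : ∀ i, i < n + 1 → (CWn i).Nodup := fun i hi => (ih i hi).2
    have hmapp := map_prodsG fol hC fol_nb fol_na (m := n + 1)
    have hndp := prodsW_nodup hm2 hnd
    by_cases he : (n + 1) % 2 = 0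
    · rw [if_neg h1, if_neg h1, if_pos he, if_pos he]
      exact ⟨hmapp, hndp⟩
    · rw [if_neg h1, if_neg h1, if_neg he, if_neg he]
      have hk : (n + 1) / 2 < n + 1 := by omega
      have hmapD := map_DG fol (hC _ hk) fol_na
        (dt := FM.leaf Letter.a) (dw := ([] : Word))
      constructor
      · rw [List.map_append, hmapD, hmapp]
      · rw [List.nodup_append]
        exact ⟨DW_nodup (hnd _ hk), hndp,
          fun a ha b hb hab => DW_prodsW_disjoint (m := n + 1) (by omega) (by omega) ha (hab ▸ hb)⟩

end FolAux
namespace FolAux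
open List

/-! ### `B`-levels -/

lemma HBn_map : ∀ n, (HBn n).map fol = BWn n
  | 0 => rfl
  | 1 => rfl
  | n + 2 => by
    show ((HCn (n+1)).map _).map fol = (CWn (n+1)).map _
    rw [List.map_map, ← (main (n+1)).1, List.map_map]
    rfl

lemma BWn_mem {n : ℕ} {w : Word} (hw : w ∈ BWn n) :
    (n = 1 ∧ w = [Letter.b]) ∨
    (2 ≤ n ∧ ∃ v, v ∈ CWn (n - 1) ∧ w = Letter.a :: v) := by
  match n with
  | 0 => exact absurd hw (by simp [BWn])
  | 1 =>
    left
    refine ⟨rfl, ?_⟩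
    simpa [BWn] using hw
  | n + 2 =>
    right
    refine ⟨by omega, ?_⟩
    rw [show BWn (n+2) = (CWn (n+1)).map (fun v => Letter.a :: v) from rfl,
      List.mem_map] at hw
    obtain ⟨v, hv, rfl⟩ := hw
    exact ⟨v, hv, rfl⟩

lemma BWn_length {n : ℕ} {w : Word} (hw : w ∈ BWn n) : w.length = n := by
  rcases BWn_mem hw with ⟨rfl, rfl⟩ | ⟨hn, v, hv, rfl⟩
  · rfl
  · have := CWn_length _ v hv
    simp [this]; omega

lemma BWn_nodup : ∀ n, (BWn n).Nodup
  | 0 => List.nodup_nil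
  | 1 => by simp [BWn]
  | n + 2 => by
    show ((CWn (n+1)).map _).Nodup
    exact (main (n+1)).2.map (fun x y h => by injection h)

/-- `B` and `C` are disjoint. -/
lemma BWn_CWn_disjoint {n m : ℕ} {w : Word} (hb : w ∈ BWn n)
    (hc : w ∈ CWn m) : False := by
  rcases BWn_mem hb with ⟨rfl, rfl⟩ | ⟨hn, v, hv, rfl⟩
  · rcases CWn_shape hc with ⟨h, _⟩ | ⟨w', h, _, hw'⟩ |
        ⟨p, q, v, u, _, _, _, _, _, h⟩
    · exact absurd (by injection h : Letter.b = Letter.c) (by simp)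
    · have hw0 : w' = [] := by injection h with h1 h2; exact h2.symm
      subst hw0
      have h1 := CWn_pos hw'
      have h2 := CWn_length _ _ hw'
      simp at h2; omega
    · exact absurd (by injection h : Letter.b = Letter.a) (by simp)
  · rcases CWn_shape hc with ⟨h, _⟩ | ⟨w', h, _, _⟩ |
        ⟨p, q, v', u', hp, hq, hpq, hv', hu', h⟩
    · exact absurd (by injection h : Letter.a = Letter.c) (by simp)
    · exact absurd (by injection h : Letter.a = Letter.b) (by simp)
    · have hvu : v = v' ++ u' := by injection h
      have hpre : v' <+: v := hvu ▸ List.prefix_append v' u'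
      have hvv : v' = v := CWn_prefix hv' hv hpre
      rw [hvv] at hvu
      have hu0 : u'.length = 0 := by
        have := congrArg List.length hvu
        simp at this
        simp [this]
      have h1 := CWn_pos hu'
      have h2 := CWn_length _ _ hu'
      omega

/-! ### Levels and positions of trees -/

lemma mem_HC {h : FM} {n : ℕ} (hh : h ∈ HCn n) :
    lev h = n ∧ fol h ∈ CWn n := by
  have hm : fol h ∈ (HCn n).map fol := List.mem_map_of_mem (f := fol) hh
  rw [(main n).1] at hm
  exact ⟨CWn_length n _ hm, hm⟩

lemma mem_HB {h : FM} {n : ℕ} (hh : h ∈ HBn n) :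
    lev h = n ∧ fol h ∈ BWn n := by
  have hm : fol h ∈ (HBn n).map fol := List.mem_map_of_mem (f := fol) hh
  rw [HBn_map n] at hm
  exact ⟨BWn_length hm, hm⟩

/-- `findIdx` is preserved along an injective map. -/
lemma findIdx_map_eq {α β : Type} [DecidableEq α] [DecidableEq β] (f : α → β) :
    ∀ (l : List α) (a : α), a ∈ l → (l.map f).Nodup →
      (l.map f).findIdx (fun x => decide (x = f a)) =
        l.findIdx (fun x => decide (x = a)) := by
  intro l
  induction l with
  | nil => intro a ha; simp at ha
  | cons b t ihl =>
    intro a ha hnd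
    rw [List.map_cons] at hnd
    rw [List.nodup_cons] at hnd
    by_cases hfb : f b = f a
    · have hab : b = a := by
        rcases List.mem_cons.mp ha with h | h
        · exact h.symm
        · exact absurd (hfb ▸ List.mem_map_of_mem (f := f) h) hnd.1
      rw [List.map_cons, List.findIdx_cons, List.findIdx_cons]
      simp [hfb, hab]
    · have hab : b ≠ a := fun h => hfb (by rw [h])
      have hat : a ∈ t := by
        rcases List.mem_cons.mp ha with h | h
        · exact absurd h.symm hab
        · exact h
      rw [List.map_cons, List.findIdx_cons, List.findIdx_cons]
      simp [hfb, hab, ihl a hat hnd.2]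

end FolAux
open FolAux

/-- For every `n ≥ 1` the foliage map sends the sorted list `H_b^n` to the
sorted list `B_n` and the sorted list `H_c^n` to the sorted list `C_n` (an
order isomorphism of levels, the lists being duplicate-free); consequently
`f : H_b ∪ H_c → B ∪ C` is a bijection onto `B ∪ C` respecting the orders. -/

theorem foliage_order_iso :
    (∀ n : ℕ, 1 ≤ n →
      (HBn n).map fol = BWn n ∧ (HCn n).map fol = CWn n ∧
      (HBn n).Nodup ∧ (HCn n).Nodup ∧ (BWn n).Nodup ∧ (CWn n).Nodup) ∧
    Set.InjOn fol {h : FM | (∃ n, h ∈ HBn n) ∨ (∃ n, h ∈ HCn n)} ∧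
    (∀ v w : FM, (∃ n, v ∈ HBn n) → (∃ n, w ∈ HBn n) →
      (bLt v w ↔ bwLt (fol v) (fol w))) ∧
    (∀ v w : FM, (∃ n, v ∈ HCn n) → (∃ n, w ∈ HCn n) →
      (cLt v w ↔ cwLt (fol v) (fol w))) := by
  have hBmapnd : ∀ n, ((HBn n).map fol).Nodup := by
    intro n; rw [HBn_map n]; exact BWn_nodup n
  have hCmapnd : ∀ n, ((HCn n).map fol).Nodup := by
    intro n; rw [(main n).1]; exact (main n).2
  refine ⟨?_, ?_, ?_, ?_⟩
  · intro n _
    exact ⟨HBn_map n, (main n).1, List.Nodup.of_map fol (hBmapnd n),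
      List.Nodup.of_map fol (hCmapnd n), BWn_nodup n, (main n).2⟩
  · rintro v (⟨n, hv⟩ | ⟨n, hv⟩) w (⟨m, hw⟩ | ⟨m, hw⟩) hf
    · obtain ⟨hlv, hfv⟩ := mem_HB hv
      obtain ⟨hlw, hfw⟩ := mem_HB hw
      have hnm : n = m := by
        have h1 : (fol v).length = n := BWn_length hfv
        have h2 : (fol w).length = m := BWn_length hfw
        rw [← h1, ← h2, hf]
      subst hnm
      exact List.inj_on_of_nodup_map (hBmapnd n) hv hw hf
    · obtain ⟨_, hfv⟩ := mem_HB hv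
      obtain ⟨_, hfw⟩ := mem_HC hw
      exact absurd (hf ▸ hfv) (fun h => BWn_CWn_disjoint h hfw)
    · obtain ⟨_, hfv⟩ := mem_HC hv
      obtain ⟨_, hfw⟩ := mem_HB hw
      exact absurd (hf ▸ hfw) (fun h => BWn_CWn_disjoint h hfv)
    · obtain ⟨hlv, hfv⟩ := mem_HC hv
      obtain ⟨hlw, hfw⟩ := mem_HC hw
      have hnm : n = m := by
        have h1 : (fol v).length = n := CWn_length _ _ hfv
        have h2 : (fol w).length = m := CWn_length _ _ hfw
        rw [← h1, ← h2, hf]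
      subst hnm
      exact List.inj_on_of_nodup_map (hCmapnd n) hv hw hf
  · rintro v w ⟨n, hv⟩ ⟨m, hw⟩
    have hidx : ∀ (u : FM) (p : ℕ), u ∈ HBn p → bwIdx (fol u) = bIdx u := by
      intro u p hu
      obtain ⟨hlu, _⟩ := mem_HB hu
      have hu' : u ∈ HBn (lev u) := hlu ▸ hu
      show (BWn (fol u).length).findIdx (fun x => decide (x = fol u)) = _
      have hll : (fol u).length = lev u := rfl
      rw [hll, ← HBn_map (lev u)]
      exact findIdx_map_eq fol (HBn (lev u)) u hu' (hBmapnd (lev u))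
    unfold bLt bwLt
    rw [hidx v n hv, hidx w m hw]
    exact Iff.rfl
  · rintro v w ⟨n, hv⟩ ⟨m, hw⟩
    have hidx : ∀ (u : FM) (p : ℕ), u ∈ HCn p → cwIdx (fol u) = cIdx u := by
      intro u p hu
      obtain ⟨hlu, _⟩ := mem_HC hu
      have hu' : u ∈ HCn (lev u) := hlu ▸ hu
      show (CWn (fol u).length).findIdx (fun x => decide (x = fol u)) = _
      have hll : (fol u).length = lev u := rfl
      rw [hll, ← (main (lev u)).1]
      exact findIdx_map_eq fol (HCn (lev u)) u hu' (hCmapnd (lev u))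
    unfold cLt cwLt
    rw [hidx v n hv, hidx w m hw]
    exact Iff.rfl
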